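/- Let N ≥ 2, let c_1, …, c_N be complex numbers, let x, y ∈ ℝ with z = x + iy ≠ 0, set t = x/|z|, p̂ = 2x, q̂ = −(x² + y²). Define b_{N+1} = 0, b_N = c_N, and b_n = c_n + p̂·b_{n+1} + q̂·b_{n+2} for n = N−1, …, 1. Then for every n with 1 ≤ n ≤ N, b_n = Σ_{k=n}^{N} c_k · |z|^{k−n} · U_{k−n}(t), where U_m denotes the Chebyshev polynomial of the second kind of degree m. -/

import Mathlib

open Finset Complex

/-- Chebyshev representation of the Goertzel backward recurrence: with
`t = x / |z|`, one has `b n = ∑_{k=n}^{N} c k * |z|^(k-n) * U_(k-n)(t)`,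
where `U` is the Chebyshev polynomial of the second kind. -/
theorem goertzel_b_chebyshev (N : ℕ) (hN : 2 ≤ N) (c : ℕ → ℂ) (x y : ℝ) (z : ℂ)
    (hz : z = (x : ℂ) + (y : ℂ) * I) (hz0 : z ≠ 0)
    (t : ℝ) (ht : t = x / ‖z‖)
    (phat qhat : ℝ) (hp : phat = 2 * x) (hq : qhat = -(x ^ 2 + y ^ 2))
    (b : ℕ → ℂ) (hbN1 : b (N + 1) = 0) (hbN : b N = c N)
    (hb : ∀ n, 1 ≤ n → n ≤ N - 1 →
      b n = c n + (phat : ℂ) * b (n + 1) + (qhat : ℂ) * b (n + 2)) :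
    ∀ n, 1 ≤ n → n ≤ N →
      b n = ∑ k ∈ Icc n N,
        c k * ((‖z‖ ^ (k - n) : ℝ) : ℂ)
          * (((Polynomial.Chebyshev.U ℝ (k - n : ℕ)).eval t : ℝ) : ℂ) := by
  set r : ℝ := ‖z‖ with hr
  have hr0 : r ≠ 0 := by simp [hr, hz0]
  have hx : t * r = x := by rw [ht]; field_simp
  have hr2 : r ^ 2 = x ^ 2 + y ^ 2 := by
    rw [hr, hz]
    rw [← Complex.normSq_add_mul_I, Complex.sq_norm]
  set Ue : ℕ → ℝ := fun m => (Polynomial.Chebyshev.U ℝ (m : ℤ)).eval t with hUe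
  have hU0 : Ue 0 = 1 := by simp [hUe, Polynomial.Chebyshev.U_zero]
  have hU1 : Ue 1 = 2 * t := by simp [hUe, Polynomial.Chebyshev.U_one]
  have hUrec : ∀ m : ℕ, Ue (m + 2) = 2 * t * Ue (m + 1) - Ue m := by
    intro m
    have h := Polynomial.Chebyshev.U_add_two ℝ (m : ℤ)
    simp only [hUe]
    push_cast
    rw [h]
    simp
  have keyR : ∀ m : ℕ, r ^ (m + 2) * Ue (m + 2)
      = phat * (r ^ (m + 1) * Ue (m + 1)) + qhat * (r ^ m * Ue m) := by
    intro m
    rw [hUrec m, hp, hq, ← hr2]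
    have hx' : x = t * r := hx.symm
    rw [hx']
    ring
  have keyC : ∀ k m : ℕ,
      (phat : ℂ) * (c k * ((r ^ (m + 1) : ℝ) : ℂ) * ((Ue (m + 1) : ℝ) : ℂ))
        + (qhat : ℂ) * (c k * ((r ^ m : ℝ) : ℂ) * ((Ue m : ℝ) : ℂ))
      = c k * ((r ^ (m + 2) : ℝ) : ℂ) * ((Ue (m + 2) : ℝ) : ℂ) := by
    intro k m
    have h : ((r ^ (m + 2) * Ue (m + 2) : ℝ) : ℂ)
        = ((phat * (r ^ (m + 1) * Ue (m + 1)) + qhat * (r ^ m * Ue m) : ℝ) : ℂ) := by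
      exact_mod_cast congrArg (Complex.ofReal) (keyR m)
    push_cast at h ⊢
    linear_combination c k * h.symm
  have main : ∀ m n, 1 ≤ n → n ≤ N → N - n = m →
      b n = ∑ k ∈ Icc n N, c k * ((r ^ (k - n) : ℝ) : ℂ) * ((Ue (k - n) : ℝ) : ℂ) := by
    intro m
    induction m using Nat.strong_induction_on with
    | _ m ih =>
      intro n hn1 hnN hm
      rcases eq_or_lt_of_le hnN with hEq | hlt
      · subst hEq
        simp [Finset.Icc_self, hbN, hU0]
      · have hn1N : n + 1 ≤ N := hlt
        have hbn := hb n hn1 (by omega)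
        rcases eq_or_lt_of_le hn1N with hEq1 | hlt1
        · -- n + 1 = N
          have hIcc : Icc n N = {n, n + 1} := by
            ext k; simp [Finset.mem_Icc, Finset.mem_insert]; omega
          have hb1 : b (n + 1) = c (n + 1) := by rw [hEq1]; exact hbN
          have hb2 : b (n + 2) = 0 := by
            have : n + 2 = N + 1 := by omega
            rw [this]; exact hbN1
          rw [hbn, hIcc, Finset.sum_pair (by omega), hb1, hb2]
          simp only [Nat.sub_self, Nat.add_sub_cancel_left, pow_zero, pow_one, hU0, hU1,
            Complex.ofReal_one]
          have hph : (phat : ℂ) = 2 * (t : ℂ) * (r : ℂ) := by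
            rw [hp]; push_cast [← hx]; ring
          rw [hph]; push_cast; ring
        · -- n + 2 ≤ N
          have hn2N : n + 2 ≤ N := hlt1
          have h1 := ih (N - (n + 1)) (by omega) (n + 1) (by omega) (by omega) rfl
          have h2 := ih (N - (n + 2)) (by omega) (n + 2) (by omega) (by omega) rfl
          have hsum : (phat : ℂ) * (∑ k ∈ Icc (n + 2) N, c k * ((r ^ (k - (n + 1)) : ℝ) : ℂ)
                * ((Ue (k - (n + 1)) : ℝ) : ℂ))
              + (qhat : ℂ) * (∑ k ∈ Icc (n + 2) N, c k * ((r ^ (k - (n + 2)) : ℝ) : ℂ)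
                * ((Ue (k - (n + 2)) : ℝ) : ℂ))
              = ∑ k ∈ Icc (n + 2) N, c k * ((r ^ (k - n) : ℝ) : ℂ) * ((Ue (k - n) : ℝ) : ℂ) := by
            rw [Finset.mul_sum, Finset.mul_sum, ← Finset.sum_add_distrib]
            apply Finset.sum_congr rfl
            intro k hk
            simp only [Finset.mem_Icc] at hk
            obtain ⟨m', hm'⟩ : ∃ m', k = n + 2 + m' := ⟨k - (n + 2), by omega⟩
            subst hm'
            have ha : n + 2 + m' - (n + 1) = m' + 1 := by omega
            have hb' : n + 2 + m' - (n + 2) = m' := by omega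
            have hc' : n + 2 + m' - n = m' + 2 := by omega
            rw [ha, hb', hc']
            exact keyC _ m'
          have e2 : Icc (n + 1) N = insert (n + 1) (Icc (n + 2) N) := by
            ext k; simp [Finset.mem_Icc, Finset.mem_insert]; omega
          have e1 : Icc n N = insert n (insert (n + 1) (Icc (n + 2) N)) := by
            rw [← e2]; ext k; simp [Finset.mem_Icc, Finset.mem_insert]; omega
          rw [hbn, h1, h2, e2, Finset.sum_insert (by simp)]
          rw [e1, Finset.sum_insert (by rw [← e2]; simp),
            Finset.sum_insert (by simp)]
          rw [← hsum]
          simp only [Nat.sub_self, Nat.add_sub_cancel_left, pow_zero, pow_one, hU0, hU1,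
            Complex.ofReal_one]
          have hph : (phat : ℂ) = 2 * (t : ℂ) * (r : ℂ) := by
            rw [hp]; push_cast [← hx]; ring
          rw [hph]; push_cast; ring
  intro n hn1 hnN
  have := main (N - n) n hn1 hnN rfl
  rw [this]
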